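/- Suppose F₂ : ℝ → ℝ is a C² function, F₁ : ℝ → ℝ is C⁰, and the identity 0 = F₂''(y)(x−y)² + 2(F₁'(x) + 2F₂'(y))(x−y) − 6(F₁(x) − F₂(y)) holds for all x, y in open intervals I₁, I₂ respectively (with F₁ differentiable). Then F₁ is a polynomial of degree at most 3, and F₁ = F₂ (as polynomial functions). -/

import Mathlib

open Set

/-- A function with zero derivative on an open interval is constant there. -/
lemma constOn_of_deriv_zero {a b : ℝ} {f : ℝ → ℝ}
    (hf : DifferentiableOn ℝ f (Set.Ioo a b))
    (h0 : ∀ z ∈ Set.Ioo a b, deriv f z = 0)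
    {x y : ℝ} (hx : x ∈ Set.Ioo a b) (hy : y ∈ Set.Ioo a b) : f x = f y := by
  apply (convex_Ioo a b).is_const_of_fderivWithin_eq_zero hf _ hx hy
  intro z hz
  rw [fderivWithin_of_isOpen isOpen_Ioo hz]
  ext
  simp [← toSpanSingleton_deriv, h0 z hz]

theorem stmt3 (a₁ b₁ a₂ b₂ : ℝ) (h₁ : a₁ < b₁) (h₂ : a₂ < b₂)
    (F₁ F₂ : ℝ → ℝ)
    (hF₁ : ContDiffOn ℝ 4 F₁ (Set.Ioo a₁ b₁))
    (hF₂ : ContDiffOn ℝ 2 F₂ (Set.Ioo a₂ b₂))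
    (hid : ∀ x ∈ Set.Ioo a₁ b₁, ∀ y ∈ Set.Ioo a₂ b₂,
      0 = deriv (deriv F₂) y * (x - y) ^ 2
        + 2 * (deriv F₁ x + 2 * deriv F₂ y) * (x - y)
        - 6 * (F₁ x - F₂ y)) :
    ∃ p : Polynomial ℝ, p.natDegree ≤ 3 ∧
      (∀ x ∈ Set.Ioo a₁ b₁, F₁ x = p.eval x) ∧
      (∀ y ∈ Set.Ioo a₂ b₂, F₂ y = p.eval y) := by
  set s := Set.Ioo a₁ b₁ with hs
  set t := Set.Ioo a₂ b₂ with ht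
  have hso : IsOpen s := isOpen_Ioo
  -- differentiability facts
  have cd1 : ContDiffOn ℝ 3 (deriv F₁) s := hF₁.deriv_of_isOpen hso (by norm_num)
  have cd2 : ContDiffOn ℝ 2 (deriv (deriv F₁)) s := cd1.deriv_of_isOpen hso (by norm_num)
  have d0 : DifferentiableOn ℝ F₁ s := hF₁.differentiableOn (by norm_num)
  have d1 : DifferentiableOn ℝ (deriv F₁) s := cd1.differentiableOn (by norm_num)
  have d2 : DifferentiableOn ℝ (deriv (deriv F₁)) s := cd2.differentiableOn (by norm_num)
  have hD0 : ∀ x ∈ s, HasDerivAt F₁ (deriv F₁ x) x := fun x hx =>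
    (d0.differentiableAt (hso.mem_nhds hx)).hasDerivAt
  have hD1 : ∀ x ∈ s, HasDerivAt (deriv F₁) (deriv (deriv F₁) x) x := fun x hx =>
    (d1.differentiableAt (hso.mem_nhds hx)).hasDerivAt
  have hD2 : ∀ x ∈ s, HasDerivAt (deriv (deriv F₁)) (deriv (deriv (deriv F₁)) x) x := fun x hx =>
    (d2.differentiableAt (hso.mem_nhds hx)).hasDerivAt
  -- first differentiated identity
  have h1 : ∀ x ∈ s, ∀ y ∈ t,
      0 = (deriv (deriv F₂) y + deriv (deriv F₁) x) * (x - y)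
          + 2 * deriv F₂ y - 2 * deriv F₁ x := by
    intro x hx y hy
    set φ : ℝ → ℝ := fun z => deriv (deriv F₂) y * (z - y) ^ 2
        + 2 * (deriv F₁ z + 2 * deriv F₂ y) * (z - y) - 6 * (F₁ z - F₂ y) with hφdef
    have hA : HasDerivAt (fun z : ℝ => z - y) 1 x := (hasDerivAt_id x).sub_const y
    have hA2 : HasDerivAt (fun z : ℝ => (z - y) ^ 2) (2 * (x - y)) x := by
      simpa using (show HasDerivAt (fun z : ℝ => (z - y) ^ 2) _ x from hA.pow 2)
    have hT1 : HasDerivAt (fun z : ℝ => deriv (deriv F₂) y * (z - y) ^ 2)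
        (deriv (deriv F₂) y * (2 * (x - y))) x := hA2.const_mul _
    have hB : HasDerivAt (fun z => 2 * (deriv F₁ z + 2 * deriv F₂ y))
        (2 * deriv (deriv F₁) x) x := ((hD1 x hx).add_const _).const_mul 2
    have hT2 : HasDerivAt (fun z => 2 * (deriv F₁ z + 2 * deriv F₂ y) * (z - y))
        (2 * deriv (deriv F₁) x * (x - y) + 2 * (deriv F₁ x + 2 * deriv F₂ y) * 1) x :=
      hB.mul hA
    have hT3 : HasDerivAt (fun z => 6 * (F₁ z - F₂ y)) (6 * deriv F₁ x) x := by
      simpa using ((hD0 x hx).sub_const (F₂ y)).const_mul 6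
    have hφ : HasDerivAt φ
        (deriv (deriv F₂) y * (2 * (x - y))
          + (2 * deriv (deriv F₁) x * (x - y) + 2 * (deriv F₁ x + 2 * deriv F₂ y) * 1)
          - 6 * deriv F₁ x) x := (hT1.add hT2).sub hT3
    have hzero : φ =ᶠ[nhds x] fun _ => (0 : ℝ) :=
      Filter.eventuallyEq_of_mem (hso.mem_nhds hx) (fun z hz => (hid z hz y hy).symm)
    have : deriv φ x = 0 := by rw [hzero.deriv_eq]; simp
    rw [hφ.deriv] at this
    linear_combination -this / 2
  -- second differentiated identity
  have h2 : ∀ x ∈ s, ∀ y ∈ t,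
      0 = deriv (deriv (deriv F₁)) x * (x - y)
          + deriv (deriv F₂) y - deriv (deriv F₁) x := by
    intro x hx y hy
    set φ : ℝ → ℝ := fun z => (deriv (deriv F₂) y + deriv (deriv F₁) z) * (z - y)
        + 2 * deriv F₂ y - 2 * deriv F₁ z with hφdef
    have hA : HasDerivAt (fun z : ℝ => z - y) 1 x := (hasDerivAt_id x).sub_const y
    have hB : HasDerivAt (fun z => deriv (deriv F₂) y + deriv (deriv F₁) z)
        (deriv (deriv (deriv F₁)) x) x := (hD2 x hx).const_add _
    have hT1 : HasDerivAt (fun z => (deriv (deriv F₂) y + deriv (deriv F₁) z) * (z - y))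
        (deriv (deriv (deriv F₁)) x * (x - y)
          + (deriv (deriv F₂) y + deriv (deriv F₁) x) * 1) x := hB.mul hA
    have hT2 : HasDerivAt (fun z => 2 * deriv F₁ z) (2 * deriv (deriv F₁) x) x :=
      (hD1 x hx).const_mul 2
    have hφ : HasDerivAt φ
        (deriv (deriv (deriv F₁)) x * (x - y)
          + (deriv (deriv F₂) y + deriv (deriv F₁) x) * 1 - 2 * deriv (deriv F₁) x) x :=
      (hT1.add_const _).sub hT2
    have hzero : φ =ᶠ[nhds x] fun _ => (0 : ℝ) :=
      Filter.eventuallyEq_of_mem (hso.mem_nhds hx) (fun z hz => (h1 z hz y hy).symm)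
    have : deriv φ x = 0 := by rw [hzero.deriv_eq]; simp
    rw [hφ.deriv] at this
    linear_combination -this
  -- fixed points
  have hx₀ : (a₁ + b₁) / 2 ∈ s := ⟨by linarith, by linarith⟩
  set x₀ := (a₁ + b₁) / 2
  have hy₁ : a₂ + (b₂ - a₂) / 3 ∈ t := ⟨by linarith, by linarith⟩
  have hy₂ : a₂ + 2 * (b₂ - a₂) / 3 ∈ t := ⟨by linarith, by linarith⟩
  set y₁ := a₂ + (b₂ - a₂) / 3
  set y₂ := a₂ + 2 * (b₂ - a₂) / 3
  -- third derivative constant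
  set c := deriv (deriv (deriv F₁)) x₀ with hc
  have h3c : ∀ x ∈ s, deriv (deriv (deriv F₁)) x = c := by
    intro x hx
    have e1 := h2 x hx y₁ hy₁
    have e2 := h2 x hx y₂ hy₂
    have e3 := h2 x₀ hx₀ y₁ hy₁
    have e4 := h2 x₀ hx₀ y₂ hy₂
    have hne : y₂ - y₁ ≠ 0 := by simp only [y₁, y₂]; intro h; nlinarith
    have : deriv (deriv (deriv F₁)) x * (y₂ - y₁) = c * (y₂ - y₁) := by
      linear_combination e2 - e1 + e3 - e4
    exact mul_right_cancel₀ hne this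
  -- define polynomial coefficients
  set cD := c / 6 with hcD
  set cC := (deriv (deriv F₁) x₀ - c * x₀) / 2 with hcC
  set cB := deriv F₁ x₀ - 2 * cC * x₀ - 3 * cD * x₀ ^ 2 with hcB
  set cA := F₁ x₀ - cB * x₀ - cC * x₀ ^ 2 - cD * x₀ ^ 3 with hcA
  -- F₁'' is the right linear function
  have step1 : ∀ x ∈ s, deriv (deriv F₁) x = 2 * cC + 6 * cD * x := by
    intro x hx
    have key : ∀ z ∈ s, deriv (fun w => deriv (deriv F₁) w - c * w) z = 0 := by
      intro z hz
      have hq : HasDerivAt (fun w : ℝ => c * w) c z := by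
        simpa using (hasDerivAt_id z).const_mul c
      have h := (show HasDerivAt (fun w => deriv (deriv F₁) w - c * w) _ z from (hD2 z hz).sub hq).deriv
      rw [h, h3c z hz]; ring
    have hconst := constOn_of_deriv_zero
      (f := fun w => deriv (deriv F₁) w - c * w)
      (d2.sub (differentiable_id.const_mul c).differentiableOn) key hx hx₀
    simp only [hcD, hcC] at *
    linear_combination hconst
  -- F₁' is the right quadratic
  have step2 : ∀ x ∈ s, deriv F₁ x = cB + 2 * cC * x + 3 * cD * x ^ 2 := by
    intro x hx
    have key : ∀ z ∈ s, deriv (fun w => deriv F₁ w - (2 * cC * w + 3 * cD * w ^ 2)) z = 0 := by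
      intro z hz
      have hq : HasDerivAt (fun w : ℝ => 2 * cC * w + 3 * cD * w ^ 2)
          (2 * cC + 3 * cD * (2 * z)) z := by
        have := ((hasDerivAt_id z).const_mul (2 * cC)).add
          ((hasDerivAt_pow 2 z).const_mul (3 * cD))
        simpa using (show HasDerivAt (fun w : ℝ => 2 * cC * w + 3 * cD * w ^ 2) _ z from this)
      have h := (show HasDerivAt (fun w => deriv F₁ w - (2 * cC * w + 3 * cD * w ^ 2)) _ z from (hD1 z hz).sub hq).deriv
      rw [h, step1 z hz]; ring
    have hdq : DifferentiableOn ℝ (fun w : ℝ => 2 * cC * w + 3 * cD * w ^ 2) s := by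
      apply DifferentiableOn.add <;> apply Differentiable.differentiableOn
      · exact differentiable_id.const_mul _
      · exact (differentiable_pow 2).const_mul _
    have hconst := constOn_of_deriv_zero
      (f := fun w => deriv F₁ w - (2 * cC * w + 3 * cD * w ^ 2))
      (d1.sub hdq) key hx hx₀
    simp only [hcB] at *
    linear_combination hconst
  -- F₁ is the right cubic
  have step3 : ∀ x ∈ s, F₁ x = cA + cB * x + cC * x ^ 2 + cD * x ^ 3 := by
    intro x hx
    have key : ∀ z ∈ s,
        deriv (fun w => F₁ w - (cB * w + cC * w ^ 2 + cD * w ^ 3)) z = 0 := by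
      intro z hz
      have hq : HasDerivAt (fun w : ℝ => cB * w + cC * w ^ 2 + cD * w ^ 3)
          (cB + cC * (2 * z) + cD * (3 * z ^ 2)) z := by
        have := (((hasDerivAt_id z).const_mul cB).add
          ((hasDerivAt_pow 2 z).const_mul cC)).add ((hasDerivAt_pow 3 z).const_mul cD)
        simpa using (show HasDerivAt (fun w : ℝ => cB * w + cC * w ^ 2 + cD * w ^ 3) _ z from this)
      have h := (show HasDerivAt (fun w => F₁ w - (cB * w + cC * w ^ 2 + cD * w ^ 3)) _ z from (hD0 z hz).sub hq).deriv
      rw [h, step2 z hz]; ring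
    have hdq : DifferentiableOn ℝ (fun w : ℝ => cB * w + cC * w ^ 2 + cD * w ^ 3) s := by
      apply DifferentiableOn.add
      apply DifferentiableOn.add
      all_goals apply Differentiable.differentiableOn
      · exact differentiable_id.const_mul _
      · exact (differentiable_pow 2).const_mul _
      · exact (differentiable_pow 3).const_mul _
    have hconst := constOn_of_deriv_zero
      (f := fun w => F₁ w - (cB * w + cC * w ^ 2 + cD * w ^ 3))
      (d0.sub hdq) key hx hx₀
    simp only [hcA] at *
    linear_combination hconst
  -- now F₂ on t
  have hF2vals : ∀ y ∈ t, F₂ y = cA + cB * y + cC * y ^ 2 + cD * y ^ 3 := by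
    intro y hy
    have e2 := h2 x₀ hx₀ y hy
    have e1 := h1 x₀ hx₀ y hy
    have e0 := hid x₀ hx₀ y hy
    have hc3 : deriv (deriv (deriv F₁)) x₀ = 6 * cD := by rw [h3c x₀ hx₀, hcD]; ring
    have hc2 : deriv (deriv F₁) x₀ = 2 * cC + 6 * cD * x₀ := step1 x₀ hx₀
    have hc1 : deriv F₁ x₀ = cB + 2 * cC * x₀ + 3 * cD * x₀ ^ 2 := step2 x₀ hx₀
    have hc0 : F₁ x₀ = cA + cB * x₀ + cC * x₀ ^ 2 + cD * x₀ ^ 3 := step3 x₀ hx₀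
    rw [hc3, hc2] at e2
    have hF2'' : deriv (deriv F₂) y = 2 * cC + 6 * cD * y := by linear_combination -e2
    rw [hF2'', hc2, hc1] at e1
    have hF2' : deriv F₂ y = cB + 2 * cC * y + 3 * cD * y ^ 2 := by linear_combination -e1 / 2
    rw [hF2'', hF2', hc1, hc0] at e0
    linear_combination -e0 / 6
  -- assemble polynomial
  refine ⟨Polynomial.C cA + Polynomial.C cB * Polynomial.X
      + Polynomial.C cC * Polynomial.X ^ 2 + Polynomial.C cD * Polynomial.X ^ 3,
      ?_, ?_, ?_⟩
  · compute_degree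
  · intro x hx; rw [step3 x hx]; simp
  · intro y hy; rw [hF2vals y hy]; simp
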